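/- arXiv:2603.14663 — 2 statements merged into one kernel-verified Lean document; each statement's English description precedes it below -/
import Mathlib

section
/- Let γ be a simple closed C¹ curve in ℝ² with Continuous (deriv γ.curve), and define its enclosed area A = (1/2)·∫₀^L (x(t)·y'(t) - y(t)·x'(t)) dt where x, y are the coordinates of γ.curve. Let f, g be the reparametrized coordinates on [0, 2π]. Then A ≤ (1/2)·∫₀^{2π} (f(θ)² + (deriv g θ)²) dθ. -/
/-- A simple closed C¹ curve in ℝⁿ, parametrized over [0, L] where L is the arc length. -/
structure SimpleClosedC1Curve (n : ℕ) where
  curve : ℝ → EuclideanSpace ℝ (Fin n)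
  length : ℝ
  length_pos : 0 < length
  continuous : Continuous curve
  has_deriv : ∀ t : ℝ, ∃ f : EuclideanSpace ℝ (Fin n), HasDerivAt curve f t
  closed : curve 0 = curve length
  periodic : ∀ t : ℝ, curve (t + length) = curve t
  simple : ∀ t s : ℝ, t ∈ Set.Ioo 0 length → s ∈ Set.Ioo 0 length →
    curve t = curve s → t = s

/-- x-coordinate of γ at s. -/
noncomputable def xCoord (γ : SimpleClosedC1Curve 2) (s : ℝ) : ℝ := γ.curve s 0

/-- y-coordinate of γ at s. -/
noncomputable def yCoord (γ : SimpleClosedC1Curve 2) (s : ℝ) : ℝ := γ.curve s 1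

/-- Reparametrized x: f(θ) = x(Lθ/(2π)). -/
noncomputable def fParm (γ : SimpleClosedC1Curve 2) (θ : ℝ) : ℝ :=
  xCoord γ (γ.length * θ / (2 * Real.pi))

/-- Reparametrized y: g(θ) = y(Lθ/(2π)). -/
noncomputable def gParm (γ : SimpleClosedC1Curve 2) (θ : ℝ) : ℝ :=
  yCoord γ (γ.length * θ / (2 * Real.pi))

/-- Unit-speed (arc-length parametrization). -/
def IsArcLengthParametrized {n : ℕ} (γ : SimpleClosedC1Curve n) : Prop :=
  ∀ t : ℝ, ‖deriv γ.curve t‖ = 1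

/-- Enclosed (signed) area via the shoelace formula. -/
noncomputable def area (γ : SimpleClosedC1Curve 2) (a b : ℝ) : ℝ :=
  (1/2) * ∫ t in a..b,
    (γ.curve t 0 * deriv γ.curve t 1 - γ.curve t 1 * deriv γ.curve t 0)

theorem area_inequality (γ : SimpleClosedC1Curve 2)
    (hdc : Continuous (deriv γ.curve)) :
    area γ 0 γ.length ≤
      (1/2) * ∫ θ in (0:ℝ)..(2*Real.pi), ((fParm γ θ)^2 + (deriv (gParm γ) θ)^2) := by
  have hπ : (0:ℝ) < Real.pi := Real.pi_pos
  have h2π : (2 * Real.pi) ≠ 0 := by positivity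
  set L := γ.length with hL
  have hLpos := γ.length_pos
  set c : ℝ := L / (2 * Real.pi) with hc
  have harg : ∀ θ : ℝ, L * θ / (2 * Real.pi) = c * θ := by
    intro θ; rw [hc]; ring
  have hcurve : ∀ t, HasDerivAt γ.curve (deriv γ.curve t) t := by
    intro t
    obtain ⟨v, hv⟩ := γ.has_deriv t
    rwa [hv.deriv]
  have hx : ∀ t, HasDerivAt (fun s => γ.curve s 0) (deriv γ.curve t 0) t := by
    intro t
    have h := (EuclideanSpace.proj (0 : Fin 2)).hasFDerivAt.comp_hasDerivAt t (hcurve t)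
    exact h
  have hy : ∀ t, HasDerivAt (fun s => γ.curve s 1) (deriv γ.curve t 1) t := by
    intro t
    have h := (EuclideanSpace.proj (1 : Fin 2)).hasFDerivAt.comp_hasDerivAt t (hcurve t)
    exact h
  have hmul : ∀ θ : ℝ, HasDerivAt (fun θ : ℝ => c * θ) c θ := by
    intro θ; simpa using (hasDerivAt_id θ).const_mul c
  have hfeq : fParm γ = fun θ : ℝ => γ.curve (c * θ) 0 := by
    funext u; rw [fParm, xCoord, harg u]
  have hgeq : gParm γ = fun θ : ℝ => γ.curve (c * θ) 1 := by
    funext u; rw [gParm, yCoord, harg u]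
  have hf : ∀ θ, HasDerivAt (fParm γ) (c * deriv γ.curve (c * θ) 0) θ := by
    intro θ
    have h2 := (hx (c * θ)).comp θ (hmul θ)
    rw [hfeq]
    exact h2.congr_deriv (mul_comm _ _)
  have hg : ∀ θ, HasDerivAt (gParm γ) (c * deriv γ.curve (c * θ) 1) θ := by
    intro θ
    have h2 := (hy (c * θ)).comp θ (hmul θ)
    rw [hgeq]
    exact h2.congr_deriv (mul_comm _ _)
  set Df : ℝ → ℝ := fun θ => c * deriv γ.curve (c * θ) 0 with hDf
  set Dg : ℝ → ℝ := fun θ => c * deriv γ.curve (c * θ) 1 with hDg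
  have hderiv_f : deriv (fParm γ) = Df := funext fun θ => (hf θ).deriv
  have hderiv_g : deriv (gParm γ) = Dg := funext fun θ => (hg θ).deriv
  -- continuity facts
  have hcx : Continuous fun t => γ.curve t 0 :=
    (EuclideanSpace.proj (0 : Fin 2)).continuous.comp γ.continuous
  have hcy : Continuous fun t => γ.curve t 1 :=
    (EuclideanSpace.proj (1 : Fin 2)).continuous.comp γ.continuous
  have hcdx : Continuous fun t => deriv γ.curve t 0 :=
    (EuclideanSpace.proj (0 : Fin 2)).continuous.comp hdc
  have hcdy : Continuous fun t => deriv γ.curve t 1 :=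
    (EuclideanSpace.proj (1 : Fin 2)).continuous.comp hdc
  have hcmul : Continuous fun θ : ℝ => c * θ := continuous_const.mul continuous_id
  have hcf : Continuous (fParm γ) := by rw [hfeq]; exact hcx.comp hcmul
  have hcg : Continuous (gParm γ) := by rw [hgeq]; exact hcy.comp hcmul
  have hcDf : Continuous Df := continuous_const.mul (hcdx.comp hcmul)
  have hcDg : Continuous Dg := continuous_const.mul (hcdy.comp hcmul)
  -- substitution
  have hc2π : c * (2 * Real.pi) = L := by rw [hc]; field_simp
  have hsub : (∫ t in (0:ℝ)..L,
      (γ.curve t 0 * deriv γ.curve t 1 - γ.curve t 1 * deriv γ.curve t 0))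
      = ∫ θ in (0:ℝ)..(2*Real.pi),
        (fParm γ θ * Dg θ - gParm γ θ * Df θ) := by
    have h := intervalIntegral.smul_integral_comp_mul_left (a := (0:ℝ)) (b := 2*Real.pi)
      (fun t => γ.curve t 0 * deriv γ.curve t 1 - γ.curve t 1 * deriv γ.curve t 0) c
    rw [mul_zero, hc2π] at h
    rw [← h, smul_eq_mul, ← intervalIntegral.integral_const_mul]
    apply intervalIntegral.integral_congr
    intro θ _
    simp only [hfeq, hgeq, hDf, hDg]
    ring
  -- integration by parts
  have hfper : fParm γ (2*Real.pi) = fParm γ 0 := by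
    have h1 : L * (2*Real.pi) / (2*Real.pi) = L := by field_simp
    have h2 : L * 0 / (2*Real.pi) = 0 := by ring
    rw [fParm, fParm, xCoord, xCoord, h1, h2, γ.closed]
  have hgper : gParm γ (2*Real.pi) = gParm γ 0 := by
    have h1 : L * (2*Real.pi) / (2*Real.pi) = L := by field_simp
    have h2 : L * 0 / (2*Real.pi) = 0 := by ring
    rw [gParm, gParm, yCoord, yCoord, h1, h2, γ.closed]
  have hibp := intervalIntegral.integral_mul_deriv_eq_deriv_mul
    (a := (0:ℝ)) (b := 2*Real.pi) (u := fParm γ) (v := gParm γ) (u' := Df) (v' := Dg)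
    (fun x _ => hf x) (fun x _ => hg x)
    (hcDf.intervalIntegrable _ _) (hcDg.intervalIntegrable _ _)
  have hswap : (∫ θ in (0:ℝ)..(2*Real.pi), gParm γ θ * Df θ)
      = ∫ θ in (0:ℝ)..(2*Real.pi), Df θ * gParm γ θ := by
    apply intervalIntegral.integral_congr; intro θ _; ring
  have hsplit : (∫ θ in (0:ℝ)..(2*Real.pi),
      (fParm γ θ * Dg θ - gParm γ θ * Df θ))
      = 2 * ∫ θ in (0:ℝ)..(2*Real.pi), fParm γ θ * Dg θ := by
    rw [intervalIntegral.integral_sub (f := fun θ => fParm γ θ * Dg θ) (g := fun θ => gParm γ θ * Df θ)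
      (((hcf.mul hcDg)).intervalIntegrable _ _)
      (((hcg.mul hcDf)).intervalIntegrable _ _), hswap]
    rw [hfper, hgper] at hibp
    linarith [hibp]
  -- pointwise bound and conclusion
  have hmono : (∫ θ in (0:ℝ)..(2*Real.pi), fParm γ θ * Dg θ)
      ≤ ∫ θ in (0:ℝ)..(2*Real.pi), (1/2) * ((fParm γ θ)^2 + (Dg θ)^2) := by
    apply intervalIntegral.integral_mono_on (f := fun θ => fParm γ θ * Dg θ)
      (g := fun θ => (1/2:ℝ) * ((fParm γ θ)^2 + (Dg θ)^2)) (by positivity)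
      ((hcf.mul hcDg).intervalIntegrable _ _)
      ((continuous_const.mul ((hcf.pow 2).add (hcDg.pow 2))).intervalIntegrable _ _)
    intro θ _
    nlinarith [sq_nonneg (fParm γ θ - Dg θ)]
  rw [area, hderiv_g, hsub, hsplit]
  rw [intervalIntegral.integral_const_mul] at hmono
  linarith [hmono]
end

section
/- Let γ be a simple closed C¹ curve in ℝ² of length L with Continuous (deriv γ.curve), arc-length parametrized (‖deriv γ.curve t‖ = 1 for all t). Suppose there exist sequences a, b : ℕ → ℝ such that: (i) ∫₀^{2π} f(θ)² dθ = π·∑'_{n:ℕ+}((a n)² + (b n)²) where f is the reparametrized x-coordinate; (ii) ∫₀^{2π} (deriv f θ)² dθ = π·∑'_{n:ℕ+} n²·((a n)² + (b n)²); and (iii) n ↦ n²·((a n)² + (b n)²) is summable over ℕ+. Then the enclosed area satisfies area γ 0 L ≤ L²/(4π). -/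
theorem isoperimetric_inequality (γ : SimpleClosedC1Curve 2)
    (hdc : Continuous (deriv γ.curve))
    (h_arc : IsArcLengthParametrized γ)
    (a b : ℕ → ℝ)
    (h_parseval : ∫ θ in (0:ℝ)..(2*Real.pi), (fParm γ θ)^2 =
        Real.pi * ∑' n : ℕ+, ((a n)^2 + (b n)^2))
    (h_wirtinger : ∫ θ in (0:ℝ)..(2*Real.pi), (deriv (fParm γ) θ)^2 =
        Real.pi * ∑' n : ℕ+, ((n : ℝ)^2 * ((a n)^2 + (b n)^2)))
    (hsum : Summable (fun n : ℕ+ => (n : ℝ)^2 * ((a n)^2 + (b n)^2))) :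
    area γ 0 γ.length ≤ γ.length^2 / (4 * Real.pi) := by
  have hπ : (0:ℝ) < Real.pi := Real.pi_pos
  have h2π : (2:ℝ) * Real.pi ≠ 0 := by positivity
  set L := γ.length with hLdef
  have hL0 : 0 < L := γ.length_pos
  set c : ℝ := L / (2 * Real.pi) with hcdef
  have hc0 : 0 < c := by positivity
  have hcne : c ≠ 0 := ne_of_gt hc0
  -- derivative of the curve
  have hD : ∀ s, HasDerivAt γ.curve (deriv γ.curve s) s := by
    intro s
    obtain ⟨v, hv⟩ := γ.has_deriv s
    exact hv.deriv ▸ hv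
  -- coordinate derivatives
  have hx : ∀ s, HasDerivAt (xCoord γ) (deriv γ.curve s 0) s := by
    intro s
    have h := ((EuclideanSpace.proj (0 : Fin 2) :
      EuclideanSpace ℝ (Fin 2) →L[ℝ] ℝ).hasFDerivAt).comp_hasDerivAt s (hD s)
    show HasDerivAt (fun s => γ.curve s 0) _ s
    simpa [Function.comp_def] using h
  have hy : ∀ s, HasDerivAt (yCoord γ) (deriv γ.curve s 1) s := by
    intro s
    have h := ((EuclideanSpace.proj (1 : Fin 2) :
      EuclideanSpace ℝ (Fin 2) →L[ℝ] ℝ).hasFDerivAt).comp_hasDerivAt s (hD s)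
    show HasDerivAt (fun s => γ.curve s 1) _ s
    simpa [Function.comp_def] using h
  -- reparametrization: fParm = xCoord ∘ (c * ·)
  have hre : ∀ θ : ℝ, L * θ / (2 * Real.pi) = c * θ := by
    intro θ; rw [hcdef]; ring
  have hfeq : fParm γ = fun θ => xCoord γ (c * θ) := by
    funext θ; rw [fParm, hre θ]
  have hgeq : gParm γ = fun θ => yCoord γ (c * θ) := by
    funext θ; rw [gParm, hre θ]
  have hmul : ∀ θ : ℝ, HasDerivAt (fun θ : ℝ => c * θ) c θ := by
    intro θ; simpa using (hasDerivAt_id θ).const_mul c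
  have hf : ∀ θ, HasDerivAt (fParm γ) (deriv γ.curve (c * θ) 0 * c) θ := by
    intro θ
    rw [hfeq]
    exact (hx (c * θ)).comp θ (hmul θ)
  have hg : ∀ θ, HasDerivAt (gParm γ) (deriv γ.curve (c * θ) 1 * c) θ := by
    intro θ
    rw [hgeq]
    exact (hy (c * θ)).comp θ (hmul θ)
  have hfd : deriv (fParm γ) = fun θ => deriv γ.curve (c * θ) 0 * c := by
    funext θ; exact (hf θ).deriv
  -- continuity facts
  have hcx' : Continuous (fun s => deriv γ.curve s 0) := by
    have := (EuclideanSpace.proj (0 : Fin 2) :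
      EuclideanSpace ℝ (Fin 2) →L[ℝ] ℝ).continuous.comp hdc
    simpa [Function.comp_def] using this
  have hcy' : Continuous (fun s => deriv γ.curve s 1) := by
    have := (EuclideanSpace.proj (1 : Fin 2) :
      EuclideanSpace ℝ (Fin 2) →L[ℝ] ℝ).continuous.comp hdc
    simpa [Function.comp_def] using this
  have hcx : Continuous (xCoord γ) := by
    have := (EuclideanSpace.proj (0 : Fin 2) :
      EuclideanSpace ℝ (Fin 2) →L[ℝ] ℝ).continuous.comp γ.continuous
    show Continuous (fun s => γ.curve s 0)
    simpa [Function.comp_def] using this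
  have hcy : Continuous (yCoord γ) := by
    have := (EuclideanSpace.proj (1 : Fin 2) :
      EuclideanSpace ℝ (Fin 2) →L[ℝ] ℝ).continuous.comp γ.continuous
    show Continuous (fun s => γ.curve s 1)
    simpa [Function.comp_def] using this
  have hcmul : Continuous (fun θ : ℝ => c * θ) := continuous_const.mul continuous_id
  have hcf : Continuous (fParm γ) := by rw [hfeq]; exact hcx.comp hcmul
  have hcg : Continuous (gParm γ) := by rw [hgeq]; exact hcy.comp hcmul
  have hcf' : Continuous (fun θ => deriv γ.curve (c * θ) 0 * c) :=
    (hcx'.comp hcmul).mul continuous_const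
  have hcg' : Continuous (fun θ => deriv γ.curve (c * θ) 1 * c) :=
    (hcy'.comp hcmul).mul continuous_const
  -- arc length condition
  have harc : ∀ t, (deriv γ.curve t 0)^2 + (deriv γ.curve t 1)^2 = 1 := by
    intro t
    have h1 := h_arc t
    rw [EuclideanSpace.norm_eq] at h1
    have h2 : ∑ i : Fin 2, ‖deriv γ.curve t i‖^2 = 1 := by
      rw [← Real.sqrt_eq_one]
      exact_mod_cast h1
    simpa [Fin.sum_univ_two, Real.norm_eq_abs, sq_abs] using h2
  -- closedness of f and g on [0, 2π]
  have hc2π : c * (2 * Real.pi) = L := by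
    rw [hcdef]; field_simp
  have hfc : fParm γ (2 * Real.pi) = fParm γ 0 := by
    rw [hfeq]; simp only [mul_zero, hc2π]
    rw [xCoord, xCoord, ← γ.closed]
  have hgc : gParm γ (2 * Real.pi) = gParm γ 0 := by
    rw [hgeq]; simp only [mul_zero, hc2π]
    rw [yCoord, yCoord, ← γ.closed]
  -- change of variables: area = (1/2) ∫ (f g' - g f')
  have hsub : (∫ t in (0:ℝ)..L,
      (γ.curve t 0 * deriv γ.curve t 1 - γ.curve t 1 * deriv γ.curve t 0))
      = ∫ θ in (0:ℝ)..(2*Real.pi),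
        (fParm γ θ * (deriv γ.curve (c*θ) 1 * c)
          - gParm γ θ * (deriv γ.curve (c*θ) 0 * c)) := by
    have h1 := intervalIntegral.smul_integral_comp_mul_left
      (fun t => γ.curve t 0 * deriv γ.curve t 1 - γ.curve t 1 * deriv γ.curve t 0)
      (a := (0:ℝ)) (b := 2*Real.pi) c
    rw [mul_zero, hc2π] at h1
    rw [← h1, smul_eq_mul, ← intervalIntegral.integral_const_mul]
    apply intervalIntegral.integral_congr
    intro θ _
    simp only [hfeq, hgeq, xCoord, yCoord]
    ring
  -- integration by parts : ∫ f' g + f g' = 0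
  have hibp : ∫ θ in (0:ℝ)..(2*Real.pi),
      ((deriv γ.curve (c*θ) 0 * c) * gParm γ θ + fParm γ θ * (deriv γ.curve (c*θ) 1 * c)) = 0 := by
    rw [intervalIntegral.integral_deriv_mul_eq_sub_of_hasDerivAt
      hcf.continuousOn hcg.continuousOn
      (fun θ _ => hf θ) (fun θ _ => hg θ)
      (hcf'.intervalIntegrable _ _) (hcg'.intervalIntegrable _ _)]
    rw [hfc, hgc]; ring
  -- area = ∫ f g'
  have harea : area γ 0 L = ∫ θ in (0:ℝ)..(2*Real.pi),
      fParm γ θ * (deriv γ.curve (c*θ) 1 * c) := by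
    rw [area, hsub]
    have hsplit : ∫ θ in (0:ℝ)..(2*Real.pi),
        (fParm γ θ * (deriv γ.curve (c*θ) 1 * c) - gParm γ θ * (deriv γ.curve (c*θ) 0 * c))
        = (∫ θ in (0:ℝ)..(2*Real.pi),
            (2 * (fParm γ θ * (deriv γ.curve (c*θ) 1 * c))))
          - ∫ θ in (0:ℝ)..(2*Real.pi),
            ((deriv γ.curve (c*θ) 0 * c) * gParm γ θ + fParm γ θ * (deriv γ.curve (c*θ) 1 * c)) := by
      rw [← intervalIntegral.integral_sub]
      · apply intervalIntegral.integral_congr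
        intro θ _; ring
      · exact ((continuous_const.mul (hcf.mul hcg')).intervalIntegrable _ _)
      · exact (((hcf'.mul hcg).add (hcf.mul hcg')).intervalIntegrable _ _)
    rw [hsplit, hibp, intervalIntegral.integral_const_mul]
    ring
  -- Wirtinger: ∫ f² ≤ ∫ f'²
  have hwir : (∫ θ in (0:ℝ)..(2*Real.pi), (fParm γ θ)^2)
      ≤ ∫ θ in (0:ℝ)..(2*Real.pi), (deriv (fParm γ) θ)^2 := by
    rw [h_parseval, h_wirtinger]
    apply mul_le_mul_of_nonneg_left _ (le_of_lt hπ)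
    apply Summable.tsum_le_tsum _ _ hsum
    · intro n
      have h1 : (1:ℝ) ≤ (n:ℝ)^2 := by
        have : (1:ℝ) ≤ (n:ℝ) := by exact_mod_cast n.one_le
        nlinarith
      nlinarith [sq_nonneg (a n), sq_nonneg (b n)]
    · apply Summable.of_nonneg_of_le (fun n => by positivity)
        (fun n => ?_) hsum
      have h1 : (1:ℝ) ≤ (n:ℝ)^2 := by
        have : (1:ℝ) ≤ (n:ℝ) := by exact_mod_cast n.one_le
        nlinarith
      nlinarith [sq_nonneg (a n), sq_nonneg (b n)]
  -- energy identity: ∫ f'² + g'² = 2π c²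
  have henergy : (∫ θ in (0:ℝ)..(2*Real.pi),
      ((deriv γ.curve (c*θ) 0 * c)^2 + (deriv γ.curve (c*θ) 1 * c)^2)) = 2 * Real.pi * c^2 := by
    have : ∀ θ ∈ Set.uIcc (0:ℝ) (2*Real.pi),
        (deriv γ.curve (c*θ) 0 * c)^2 + (deriv γ.curve (c*θ) 1 * c)^2 = c^2 := by
      intro θ _
      have := harc (c*θ)
      nlinarith
    rw [intervalIntegral.integral_congr this, intervalIntegral.integral_const, smul_eq_mul]
    ring
  -- pointwise AM-GM bound and assembly
  have hbound : area γ 0 L ≤ (1/2) * ((∫ θ in (0:ℝ)..(2*Real.pi), (fParm γ θ)^2)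
      + ∫ θ in (0:ℝ)..(2*Real.pi), (deriv γ.curve (c*θ) 1 * c)^2) := by
    rw [harea, ← intervalIntegral.integral_add (f := fun θ => fParm γ θ ^ 2)
      (g := fun θ => (deriv γ.curve (c*θ) 1 * c)^2)
      ((hcf.pow 2).intervalIntegrable _ _) ((hcg'.pow 2).intervalIntegrable _ _),
      ← intervalIntegral.integral_const_mul]
    apply intervalIntegral.integral_mono_on (by positivity)
      ((hcf.mul hcg').intervalIntegrable _ _)
      ((continuous_const.mul ((hcf.pow 2).add (hcg'.pow 2))).intervalIntegrable _ _)
    intro θ _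
    simp only [Pi.mul_apply, Pi.add_apply, Pi.pow_apply]
    nlinarith [sq_nonneg (fParm γ θ - deriv γ.curve (c*θ) 1 * c)]
  have hsplit2 : (∫ θ in (0:ℝ)..(2*Real.pi), (deriv (fParm γ) θ)^2)
      + (∫ θ in (0:ℝ)..(2*Real.pi), (deriv γ.curve (c*θ) 1 * c)^2)
      = 2 * Real.pi * c^2 := by
    rw [hfd, ← intervalIntegral.integral_add (f := fun θ => (deriv γ.curve (c*θ) 0 * c)^2)
      (g := fun θ => (deriv γ.curve (c*θ) 1 * c)^2)
      ((hcf'.pow 2).intervalIntegrable _ _) ((hcg'.pow 2).intervalIntegrable _ _)]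
    exact henergy
  have hfinal : area γ 0 L ≤ Real.pi * c^2 := by
    calc area γ 0 L ≤ (1/2) * ((∫ θ in (0:ℝ)..(2*Real.pi), (fParm γ θ)^2)
        + ∫ θ in (0:ℝ)..(2*Real.pi), (deriv γ.curve (c*θ) 1 * c)^2) := hbound
      _ ≤ (1/2) * ((∫ θ in (0:ℝ)..(2*Real.pi), (deriv (fParm γ) θ)^2)
        + ∫ θ in (0:ℝ)..(2*Real.pi), (deriv γ.curve (c*θ) 1 * c)^2) := by
          apply mul_le_mul_of_nonneg_left _ (by norm_num)
          linarith
      _ = Real.pi * c^2 := by rw [hsplit2]; ring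
  have : Real.pi * c^2 = L^2 / (4 * Real.pi) := by
    rw [hcdef]; field_simp; ring
  linarith [hfinal, this.le, this.ge]
end
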